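/- arXiv:2002.02344 — 2 statements merged into one kernel-verified Lean document; each statement's English description precedes it below -/
import Mathlib

section
/- Let n be a positive integer and let A_1,…,A_n, B_1,…,B_n be bounded linear operators on a Banach space. Then there exists l ∈ {1,…,n} such that, setting ζ_j = e^{2πijl/n}, one has ‖∑_{j=1}^n A_j B_j‖ ≤ ‖∑_{j=1}^n ζ_j A_j‖ · ‖∑_{j=1}^n (conj ζ_j) B_j‖. -/
open Complex

lemma exp_mul_conj_aux (n j k l : ℕ) :
    Complex.exp (2 * Real.pi * Complex.I * j * l / n) *
      (starRingEnd ℂ) (Complex.exp (2 * Real.pi * Complex.I * k * l / n)) =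
    Complex.exp (2 * Real.pi * Complex.I * ((j : ℂ) - k) / n) ^ l := by
  rw [← Complex.exp_conj, ← Complex.exp_add, ← Complex.exp_nat_mul]
  congr 1
  simp only [map_div₀, map_mul, Complex.conj_I, Complex.conj_ofReal, map_ofNat,
    Complex.conj_natCast]
  ring

lemma root_sum_aux (n : ℕ) (hn : 0 < n) {j k : ℕ} (hj : j ∈ Finset.Icc 1 n)
    (hk : k ∈ Finset.Icc 1 n) :
    ∑ l ∈ Finset.Icc 1 n, Complex.exp (2 * Real.pi * Complex.I * ((j : ℂ) - k) / n) ^ l =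
    if j = k then (n : ℂ) else 0 := by
  simp only [Finset.mem_Icc] at hj hk
  have hn' : (n : ℂ) ≠ 0 := Nat.cast_ne_zero.2 hn.ne'
  by_cases hjk : j = k
  · subst hjk
    simp [Nat.card_Icc]
  · set ζ := Complex.exp (2 * Real.pi * Complex.I * ((j : ℂ) - k) / n) with hζ
    have hzn : ζ ^ n = 1 := by
      rw [hζ, ← Complex.exp_nat_mul, Complex.exp_eq_one_iff]
      refine ⟨(j : ℤ) - k, ?_⟩
      push_cast
      field_simp
    have hz1 : ζ ≠ 1 := by
      intro h
      rw [hζ, Complex.exp_eq_one_iff] at h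
      obtain ⟨m, hm⟩ := h
      have hπ : (2 : ℂ) * Real.pi * Complex.I ≠ 0 := by
        simp [Real.pi_ne_zero, Complex.I_ne_zero]
      have h2 : 2 * (Real.pi : ℂ) * Complex.I * ((j : ℂ) - k) =
          2 * (Real.pi : ℂ) * Complex.I * (m * n) := by
        field_simp at hm
        linear_combination (2 * (Real.pi : ℂ) * Complex.I) * hm
      have h3 : (j : ℂ) - k = (m : ℂ) * n := mul_left_cancel₀ hπ h2
      have h4 : (j : ℤ) - k = m * n := by exact_mod_cast h3
      have h5 : (n : ℤ) ∣ (j : ℤ) - k := ⟨m, by linarith [h4]⟩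
      have h6 : (j : ℤ) - k = 0 := Int.eq_zero_of_abs_lt_dvd h5 (by
        rw [abs_lt]; omega)
      omega
    rw [if_neg hjk, show Finset.Icc 1 n = Finset.Ico 1 (n+1) from by ext x; simp only [Finset.mem_Icc, Finset.mem_Ico]; omega,
      Finset.sum_Ico_eq_sum_range]
    simp only [Nat.add_sub_cancel]
    have : ∀ i : ℕ, ζ ^ (1 + i) = ζ * ζ ^ i := fun i => pow_add ζ 1 i ▸ by ring
    simp only [this, ← Finset.mul_sum, geom_sum_eq hz1, hzn]
    simp

theorem stmt0 {E : Type*} [NormedAddCommGroup E] [NormedSpace ℂ E] [CompleteSpace E]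
    (n : ℕ) (hn : 0 < n) (A B : ℕ → E →L[ℂ] E) :
    ∃ l ∈ Finset.Icc 1 n,
      ‖∑ j ∈ Finset.Icc 1 n, A j ∘L B j‖ ≤
        ‖∑ j ∈ Finset.Icc 1 n,
            Complex.exp (2 * Real.pi * Complex.I * j * l / n) • A j‖ *
        ‖∑ j ∈ Finset.Icc 1 n,
            (starRingEnd ℂ) (Complex.exp (2 * Real.pi * Complex.I * j * l / n)) • B j‖ := by
  set c : ℕ → ℕ → ℂ := fun j l => Complex.exp (2 * Real.pi * Complex.I * j * l / n) with hc
  set T := ∑ j ∈ Finset.Icc 1 n, A j ∘L B j with hT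
  set P : ℕ → E →L[ℂ] E := fun l => ∑ j ∈ Finset.Icc 1 n, c j l • A j with hP
  set Q : ℕ → E →L[ℂ] E := fun l => ∑ j ∈ Finset.Icc 1 n, (starRingEnd ℂ) (c j l) • B j with hQ
  have expand : ∀ l, P l ∘L Q l =
      ∑ j ∈ Finset.Icc 1 n, ∑ k ∈ Finset.Icc 1 n,
        (c j l * (starRingEnd ℂ) (c k l)) • (A j ∘L B k) := by
    intro l
    show P l * Q l = _
    rw [hP, hQ, Finset.sum_mul_sum]
    refine Finset.sum_congr rfl fun j _ => Finset.sum_congr rfl fun k _ => ?_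
    rw [smul_mul_assoc, mul_smul_comm, smul_smul]
    rfl
  have hsum : ∑ l ∈ Finset.Icc 1 n, P l ∘L Q l = (n : ℂ) • T := by
    simp only [expand]
    rw [Finset.sum_comm]
    have : ∀ j ∈ Finset.Icc 1 n,
        (∑ l ∈ Finset.Icc 1 n, ∑ k ∈ Finset.Icc 1 n,
          (c j l * (starRingEnd ℂ) (c k l)) • (A j ∘L B k)) = (n : ℂ) • (A j ∘L B j) := by
      intro j hj
      rw [Finset.sum_comm]
      have inner : ∀ k ∈ Finset.Icc 1 n,
          (∑ l ∈ Finset.Icc 1 n, (c j l * (starRingEnd ℂ) (c k l)) • (A j ∘L B k)) =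
          (if j = k then (n : ℂ) else 0) • (A j ∘L B k) := by
        intro k hk
        rw [← Finset.sum_smul, ← root_sum_aux n hn hj hk]
        refine congrArg (· • (A j ∘L B k)) (Finset.sum_congr rfl fun l _ => ?_)
        exact exp_mul_conj_aux n j k l
      rw [Finset.sum_congr rfl inner]
      simp only [ite_smul, zero_smul]
      simp [Finset.sum_ite_eq, hj]
    rw [Finset.sum_congr rfl this, ← Finset.smul_sum]
  have hnorm : (n : ℝ) * ‖T‖ ≤ ∑ l ∈ Finset.Icc 1 n, ‖P l ∘L Q l‖ := by
    calc (n : ℝ) * ‖T‖ = ‖(n : ℂ) • T‖ := by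
          rw [norm_smul (n : ℂ) T]; simp
      _ = ‖∑ l ∈ Finset.Icc 1 n, P l ∘L Q l‖ := by rw [hsum]
      _ ≤ ∑ l ∈ Finset.Icc 1 n, ‖P l ∘L Q l‖ := norm_sum_le _ _
  have hsum' : ∑ l ∈ Finset.Icc 1 n, ‖T‖ ≤ ∑ l ∈ Finset.Icc 1 n, ‖P l ∘L Q l‖ := by
    simpa [Finset.sum_const, Nat.card_Icc, nsmul_eq_mul] using hnorm
  obtain ⟨l, hl, hle⟩ := Finset.exists_le_of_sum_le ⟨1, by simp; omega⟩ hsum'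
  exact ⟨l, hl, hle.trans (ContinuousLinearMap.opNorm_comp_le _ _)⟩
end

section
/- There is a constant C > 0, depending only on p ∈ (1,∞) and the dimension n, such that for every α > 0 and every z ∈ ℂ^n with |z| ≤ 1/√α, the normalized reproducing kernel k_z satisfies ‖k_z − 1‖_p ≤ C √α |z|, where 1 denotes the constant function. -/
set_option maxHeartbeats 1000000


open MeasureTheory

/-- Lebesgue measure on `ℂ^n`, via the identification `ℂ^n ≅ ℝ^{2n}` (product measure). -/
noncomputable instance (n : ℕ) : MeasureSpace (EuclideanSpace ℂ (Fin n)) :=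
  { toMeasurableSpace := WithLp.measurableSpace 2 (Fin n → ℂ)
    volume := (volume : Measure (Fin n → ℂ)).map (WithLp.toLp 2) }

/-- The normalized reproducing kernel `k_w(z) = exp(α z·w̄ − (α/2)|w|²)` of the Fock space.
Note that `z·w̄ = ⟪w, z⟫` in Mathlib's convention for the inner product on `ℂ^n`. -/
noncomputable def fockKernel (n : ℕ) (α : ℝ) (w z : EuclideanSpace ℂ (Fin n)) : ℂ :=
  Complex.exp (α * (inner ℂ w z : ℂ) - α / 2 * (‖w‖ : ℂ) ^ 2)

/-- `‖e^u - 1‖ ≤ ‖u‖ e^{‖u‖}`. -/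
lemma norm_cexp_sub_one_le (u : ℂ) :
    ‖Complex.exp u - 1‖ ≤ ‖u‖ * Real.exp ‖u‖ := by
  have hderiv : ∀ t ∈ Set.Icc (0 : ℝ) 1,
      HasDerivWithinAt (fun t : ℝ => Complex.exp (t * u))
        (Complex.exp (t * u) * u) (Set.Icc 0 1) t := by
    intro t _
    have h1 : HasDerivAt (fun s : ℂ => Complex.exp (s * u))
        (Complex.exp ((t : ℂ) * u) * (1 * u)) (t : ℂ) :=
      ((hasDerivAt_id ((t : ℝ) : ℂ)).mul_const u).cexp
    simpa using (h1.comp_ofReal).hasDerivWithinAt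
  have hbound : ∀ t ∈ Set.Ico (0 : ℝ) 1,
      ‖Complex.exp (t * u) * u‖ ≤ Real.exp ‖u‖ * ‖u‖ := by
    intro t ht
    rw [norm_mul]
    gcongr
    rw [Complex.norm_exp]
    apply Real.exp_le_exp.mpr
    have : ((t : ℂ) * u).re = t * u.re := by
      simp [Complex.mul_re]
    rw [this]
    calc t * u.re ≤ t * ‖u‖ := by
          apply mul_le_mul_of_nonneg_left _ ht.1
          exact Complex.re_le_norm u
      _ ≤ 1 * ‖u‖ := by
          apply mul_le_mul_of_nonneg_right (le_of_lt ht.2) (norm_nonneg u)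
      _ = ‖u‖ := one_mul _
  have := norm_image_sub_le_of_norm_deriv_le_segment' hderiv hbound 1 ⟨zero_le_one, le_refl 1⟩
  simpa [mul_comm] using this

/-- The Gaussian integral over `ℂ`. -/
lemma integrable_gauss_complex {b : ℝ} (hb : 0 < b) :
    Integrable (fun z : ℂ => Real.exp (-b * ‖z‖ ^ 2)) := by
  have h := Complex.volume_preserving_equiv_real_prod.symm
  rw [← h.integrable_comp_emb (MeasurableEquiv.measurableEmbedding _)]
  have : ((fun z : ℂ => Real.exp (-b * ‖z‖ ^ 2)) ∘ Complex.measurableEquivRealProd.symm)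
      = fun q : ℝ × ℝ => Real.exp (-b * q.1 ^ 2) * Real.exp (-b * q.2 ^ 2) := by
    ext q
    simp only [Function.comp_apply, Complex.measurableEquivRealProd_symm_apply, ← Real.exp_add]
    congr 1
    rw [Complex.sq_norm, Complex.normSq_mk]
    ring
  rw [this]
  exact (integrable_exp_neg_mul_sq hb).mul_prod (integrable_exp_neg_mul_sq hb)

lemma integral_gauss_complex {b : ℝ} (hb : 0 < b) :
    ∫ z : ℂ, Real.exp (-b * ‖z‖ ^ 2) = Real.pi / b := by
  have h := Complex.volume_preserving_equiv_real_prod.symm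
  rw [← h.integral_comp (MeasurableEquiv.measurableEmbedding _)]
  have : (fun q : ℝ × ℝ => Real.exp (-b * ‖(Complex.measurableEquivRealProd.symm q : ℂ)‖ ^ 2))
      = fun q : ℝ × ℝ => Real.exp (-b * q.1 ^ 2) * Real.exp (-b * q.2 ^ 2) := by
    ext q
    simp only [Complex.measurableEquivRealProd_symm_apply, ← Real.exp_add]
    congr 1
    rw [Complex.sq_norm, Complex.normSq_mk]
    ring
  rw [show (fun q : ℝ × ℝ => Real.exp (-b * ‖(Complex.measurableEquivRealProd.symm q : ℂ)‖ ^ 2))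
      = _ from this]
  have key : (∫ q : ℝ × ℝ, Real.exp (-b * q.1 ^ 2) * Real.exp (-b * q.2 ^ 2)
      ∂(Measure.prod volume volume))
      = (∫ x : ℝ, Real.exp (-b * x ^ 2)) * ∫ x : ℝ, Real.exp (-b * x ^ 2) :=
    integral_prod_mul (fun x : ℝ => Real.exp (-b * x ^ 2)) (fun x : ℝ => Real.exp (-b * x ^ 2))
  rw [Measure.volume_eq_prod, key, integral_gaussian]
  rw [← Real.sqrt_mul_self (by positivity : (0:ℝ) ≤ Real.sqrt (Real.pi / b))]
  rw [Real.sqrt_mul_self (Real.sqrt_nonneg _)]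
  rw [Real.mul_self_sqrt (by positivity)]

lemma gauss_prod_eq (n : ℕ) (b : ℝ) (w : EuclideanSpace ℂ (Fin n)) :
    Real.exp (-b * ‖w‖ ^ 2) = ∏ i, Real.exp (-b * ‖w i‖ ^ 2) := by
  rw [EuclideanSpace.norm_eq, Real.sq_sqrt (by positivity), Finset.mul_sum, ← Real.exp_sum]

lemma integrable_gauss_euclidean (n : ℕ) {b : ℝ} (hb : 0 < b) :
    Integrable (fun w : EuclideanSpace ℂ (Fin n) => Real.exp (-b * ‖w‖ ^ 2)) := by
  simp only [gauss_prod_eq n b]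
  rw [show (volume : Measure (EuclideanSpace ℂ (Fin n))) = Measure.map (MeasurableEquiv.toLp 2 (Fin n → ℂ)) volume from rfl, integrable_map_equiv]
  exact Integrable.fintype_prod (f := fun _ : Fin n => fun z : ℂ => Real.exp (-b * ‖z‖ ^ 2))
    (fun _ => integrable_gauss_complex hb)

lemma integral_gauss_euclidean (n : ℕ) {b : ℝ} (hb : 0 < b) :
    ∫ w : EuclideanSpace ℂ (Fin n), Real.exp (-b * ‖w‖ ^ 2) = (Real.pi / b) ^ n := by
  simp only [gauss_prod_eq n b]
  rw [show (∫ w : EuclideanSpace ℂ (Fin n), ∏ i, Real.exp (-b * ‖w i‖ ^ 2))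
      = ∫ w : Fin n → ℂ, ∏ i, Real.exp (-b * ‖w i‖ ^ 2) from by
      rw [show (volume : Measure (EuclideanSpace ℂ (Fin n))) = Measure.map (MeasurableEquiv.toLp 2 (Fin n → ℂ)) volume from rfl, integral_map_equiv]; rfl]
  rw [volume_pi, integral_fintype_prod_eq_pow (ι := Fin n) (fun z : ℂ => Real.exp (-b * ‖z‖ ^ 2)),
    integral_gauss_complex hb, Fintype.card_fin]

theorem stmt6 (n : ℕ) (p : ℝ) (hp : 1 < p) :
    ∃ C > (0 : ℝ), ∀ α : ℝ, 0 < α → ∀ z : EuclideanSpace ℂ (Fin n),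
      ‖z‖ ≤ 1 / Real.sqrt α →
      ((α * p / (2 * Real.pi)) ^ n *
          ∫ w : EuclideanSpace ℂ (Fin n),
            (‖fockKernel n α z w - 1‖ * Real.exp (-(α / 2) * ‖w‖ ^ 2)) ^ p) ^ (1 / p)
        ≤ C * Real.sqrt α * ‖z‖ := by
  have hp0 : (0 : ℝ) < p := lt_trans one_pos hp
  refine ⟨2 ^ n * Real.exp 5, by positivity, ?_⟩
  intro α hα z hz
  set t : ℝ := Real.sqrt α * ‖z‖ with htdef
  have hsa : (0 : ℝ) < Real.sqrt α := Real.sqrt_pos.mpr hα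
  have ht0 : 0 ≤ t := by positivity
  have ht1 : t ≤ 1 := by
    rw [htdef]
    calc Real.sqrt α * ‖z‖ ≤ Real.sqrt α * (1 / Real.sqrt α) :=
          mul_le_mul_of_nonneg_left hz hsa.le
      _ = 1 := by field_simp
  have hsq : Real.sqrt α * Real.sqrt α = α := Real.mul_self_sqrt hα.le
  -- pointwise bound
  have key : ∀ w : EuclideanSpace ℂ (Fin n),
      (‖fockKernel n α z w - 1‖ * Real.exp (-(α / 2) * ‖w‖ ^ 2)) ^ p
        ≤ (t * Real.exp 5) ^ p * Real.exp (-(p * α / 4) * ‖w‖ ^ 2) := by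
    intro w
    set s : ℝ := Real.sqrt α * ‖w‖ with hsdef
    have hs0 : 0 ≤ s := by positivity
    have hs2 : s ^ 2 = α * ‖w‖ ^ 2 := by
      rw [hsdef]; rw [mul_pow, Real.sq_sqrt hα.le]
    set u : ℂ := (α : ℂ) * (inner ℂ z w : ℂ) - (α : ℂ) / 2 * (‖z‖ : ℂ) ^ 2 with hudef
    have hk : fockKernel n α z w = Complex.exp u := rfl
    have hu1 : ‖u‖ ≤ t * s + t * t / 2 := by
      have h1 : ‖u‖ ≤ ‖(α : ℂ) * (inner ℂ z w : ℂ)‖ + ‖(α : ℂ) / 2 * (‖z‖ : ℂ) ^ 2‖ :=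
        norm_sub_le _ _
      have h2 : ‖(α : ℂ) * (inner ℂ z w : ℂ)‖ ≤ α * (‖z‖ * ‖w‖) := by
        rw [norm_mul, Complex.norm_real, Real.norm_eq_abs, abs_of_pos hα]
        exact mul_le_mul_of_nonneg_left (norm_inner_le_norm z w) hα.le
      have h3 : ‖(α : ℂ) / 2 * (‖z‖ : ℂ) ^ 2‖ = α / 2 * ‖z‖ ^ 2 := by
        rw [norm_mul, norm_div, norm_pow]
        simp [Complex.norm_real, Real.norm_eq_abs, abs_of_pos hα, abs_of_nonneg (norm_nonneg z)]
      have hts : t * s = α * (‖z‖ * ‖w‖) := by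
        rw [htdef, hsdef,
          show Real.sqrt α * ‖z‖ * (Real.sqrt α * ‖w‖)
            = Real.sqrt α * Real.sqrt α * (‖z‖ * ‖w‖) from by ring, hsq]
      have htt : t * t = α * ‖z‖ ^ 2 := by
        rw [htdef,
          show Real.sqrt α * ‖z‖ * (Real.sqrt α * ‖z‖)
            = Real.sqrt α * Real.sqrt α * ‖z‖ ^ 2 from by ring, hsq]
      nlinarith [h1, h2, h3]
    have hu2 : ‖u‖ ≤ s + 1 / 2 := by nlinarith [hu1, hs0, norm_nonneg u]
    have hu3 : ‖u‖ ≤ t * (s + 1) := by nlinarith [hu1]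
    have hexp : Real.exp (-(α / 2) * ‖w‖ ^ 2) = Real.exp (-(s ^ 2) / 2) := by
      rw [hs2]; ring_nf
    have hbase : ‖fockKernel n α z w - 1‖ * Real.exp (-(α / 2) * ‖w‖ ^ 2)
        ≤ t * Real.exp 5 * Real.exp (-(α / 4) * ‖w‖ ^ 2) := by
      have step1 : ‖fockKernel n α z w - 1‖ ≤ t * (s + 1) * Real.exp (s + 1 / 2) := by
        rw [hk]
        calc ‖Complex.exp u - 1‖ ≤ ‖u‖ * Real.exp ‖u‖ := norm_cexp_sub_one_le u
          _ ≤ t * (s + 1) * Real.exp (s + 1 / 2) := by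
              apply mul_le_mul hu3 (Real.exp_le_exp.mpr hu2) (Real.exp_pos _).le
              positivity
      calc ‖fockKernel n α z w - 1‖ * Real.exp (-(α / 2) * ‖w‖ ^ 2)
          ≤ t * (s + 1) * Real.exp (s + 1 / 2) * Real.exp (-(s ^ 2) / 2) := by
            rw [hexp]
            exact mul_le_mul_of_nonneg_right step1 (Real.exp_pos _).le
        _ ≤ t * Real.exp s * Real.exp (s + 1 / 2) * Real.exp (-(s ^ 2) / 2) := by
            have : s + 1 ≤ Real.exp s := Real.add_one_le_exp s
            have h' : t * (s + 1) ≤ t * Real.exp s := mul_le_mul_of_nonneg_left this ht0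
            exact mul_le_mul_of_nonneg_right
              (mul_le_mul_of_nonneg_right h' (Real.exp_pos _).le) (Real.exp_pos _).le
        _ = t * Real.exp (s + ((s + 1 / 2) + -(s ^ 2) / 2)) := by
            rw [mul_assoc, mul_assoc, ← Real.exp_add, ← Real.exp_add]
        _ ≤ t * Real.exp (5 + -(s ^ 2) / 4) := by
            apply mul_le_mul_of_nonneg_left _ ht0
            apply Real.exp_le_exp.mpr
            nlinarith [sq_nonneg (s / 2 - 2)]
        _ = t * Real.exp 5 * Real.exp (-(α / 4) * ‖w‖ ^ 2) := by
            rw [show -(α / 4) * ‖w‖ ^ 2 = -(s ^ 2) / 4 by rw [hs2]; ring]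
            rw [Real.exp_add, htdef]; ring
    calc (‖fockKernel n α z w - 1‖ * Real.exp (-(α / 2) * ‖w‖ ^ 2)) ^ p
        ≤ (t * Real.exp 5 * Real.exp (-(α / 4) * ‖w‖ ^ 2)) ^ p :=
          Real.rpow_le_rpow (by positivity) hbase hp0.le
      _ = (t * Real.exp 5) ^ p * (Real.exp (-(α / 4) * ‖w‖ ^ 2)) ^ p :=
          Real.mul_rpow (by positivity) (Real.exp_pos _).le
      _ = (t * Real.exp 5) ^ p * Real.exp (-(p * α / 4) * ‖w‖ ^ 2) := by
          rw [← Real.exp_mul]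
          ring_nf
  -- integral bound
  have hb4 : (0 : ℝ) < p * α / 4 := by positivity
  have hInt : Integrable (fun w : EuclideanSpace ℂ (Fin n) =>
      (t * Real.exp 5) ^ p * Real.exp (-(p * α / 4) * ‖w‖ ^ 2)) :=
    (integrable_gauss_euclidean n hb4).const_mul _
  have hIle : (∫ w : EuclideanSpace ℂ (Fin n),
        (‖fockKernel n α z w - 1‖ * Real.exp (-(α / 2) * ‖w‖ ^ 2)) ^ p)
      ≤ (t * Real.exp 5) ^ p * (Real.pi / (p * α / 4)) ^ n := by
    calc (∫ w : EuclideanSpace ℂ (Fin n),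
          (‖fockKernel n α z w - 1‖ * Real.exp (-(α / 2) * ‖w‖ ^ 2)) ^ p)
        ≤ ∫ w : EuclideanSpace ℂ (Fin n),
            (t * Real.exp 5) ^ p * Real.exp (-(p * α / 4) * ‖w‖ ^ 2) := by
          apply integral_mono_of_nonneg
          · exact Filter.Eventually.of_forall fun w => Real.rpow_nonneg (by positivity) p
          · exact hInt
          · exact Filter.Eventually.of_forall key
      _ = (t * Real.exp 5) ^ p * (Real.pi / (p * α / 4)) ^ n := by
          rw [integral_const_mul, integral_gauss_euclidean n hb4]
  -- conclusion
  have hXnonneg : 0 ≤ (α * p / (2 * Real.pi)) ^ n *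
      ∫ w : EuclideanSpace ℂ (Fin n),
        (‖fockKernel n α z w - 1‖ * Real.exp (-(α / 2) * ‖w‖ ^ 2)) ^ p := by
    apply mul_nonneg (by positivity)
    exact integral_nonneg fun w => Real.rpow_nonneg (by positivity) p
  have hXle : (α * p / (2 * Real.pi)) ^ n *
      (∫ w : EuclideanSpace ℂ (Fin n),
        (‖fockKernel n α z w - 1‖ * Real.exp (-(α / 2) * ‖w‖ ^ 2)) ^ p)
      ≤ 2 ^ n * (t * Real.exp 5) ^ p := by
    have h1 : (α * p / (2 * Real.pi)) ^ n *
        ((t * Real.exp 5) ^ p * (Real.pi / (p * α / 4)) ^ n)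
        = (t * Real.exp 5) ^ p * ((α * p / (2 * Real.pi)) * (Real.pi / (p * α / 4))) ^ n := by
      rw [mul_pow]; ring
    have h2 : (α * p / (2 * Real.pi)) * (Real.pi / (p * α / 4)) = 2 := by
      field_simp
      ring
    calc (α * p / (2 * Real.pi)) ^ n *
        (∫ w : EuclideanSpace ℂ (Fin n),
          (‖fockKernel n α z w - 1‖ * Real.exp (-(α / 2) * ‖w‖ ^ 2)) ^ p)
        ≤ (α * p / (2 * Real.pi)) ^ n *
          ((t * Real.exp 5) ^ p * (Real.pi / (p * α / 4)) ^ n) := by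
          apply mul_le_mul_of_nonneg_left hIle (by positivity)
      _ = 2 ^ n * (t * Real.exp 5) ^ p := by rw [h1, h2]; ring
  have hcrux : 2 ^ n * (t * Real.exp 5) ^ p ≤ ((2 ^ n * Real.exp 5 * t) ^ p : ℝ) := by
    have h2n : (1 : ℝ) ≤ 2 ^ n := one_le_pow₀ (by norm_num)
    have e1 : ((2 : ℝ) ^ n * Real.exp 5 * t) ^ p = ((2 : ℝ) ^ n) ^ p * (t * Real.exp 5) ^ p := by
      rw [show (2 : ℝ) ^ n * Real.exp 5 * t = 2 ^ n * (t * Real.exp 5) by ring]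
      exact Real.mul_rpow (by positivity) (by positivity)
    rw [e1]
    apply mul_le_mul_of_nonneg_right _ (Real.rpow_nonneg (by positivity) p)
    calc (2 : ℝ) ^ n = ((2 : ℝ) ^ n) ^ (1 : ℝ) := (Real.rpow_one _).symm
      _ ≤ ((2 : ℝ) ^ n) ^ p := Real.rpow_le_rpow_of_exponent_le h2n hp.le
  have ha : (0 : ℝ) ≤ 2 ^ n * Real.exp 5 * t := by positivity
  calc ((α * p / (2 * Real.pi)) ^ n *
      ∫ w : EuclideanSpace ℂ (Fin n),
        (‖fockKernel n α z w - 1‖ * Real.exp (-(α / 2) * ‖w‖ ^ 2)) ^ p) ^ (1 / p)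
      ≤ ((2 ^ n * Real.exp 5 * t) ^ p) ^ (1 / p) :=
        Real.rpow_le_rpow hXnonneg (hXle.trans hcrux) (by positivity)
    _ = 2 ^ n * Real.exp 5 * t := by
        rw [← Real.rpow_mul ha, mul_one_div_cancel hp0.ne', Real.rpow_one]
    _ = 2 ^ n * Real.exp 5 * Real.sqrt α * ‖z‖ := by rw [htdef]; ring
end
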